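/- In the addition-free theta-term system T, if γ < Ω_1 (i.e., γ = 0 or γ = ϑ_0 γ'), then for every term β one has γ ≤ β[γ], with equality only when β = 0, where β[γ] denotes the result of replacing the last zero in β by γ. -/
import Mathlib


/-- Addition-free theta terms. -/
inductive TTerm : Type
  | zero : TTerm
  | theta : ℕ → TTerm → TTerm
  deriving DecidableEq

namespace TTerm

/-- `S 0 = -1`, `S (ϑ_i α) = i`. -/
def S : TTerm → ℤ
  | zero => -1
  | theta i _ => i

/-- Membership in the term system `T`: `ϑ_i α` is formed only when `S α ≤ i + 1`. -/
inductive WF : TTerm → Prop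
  | zero : WF zero
  | theta {i : ℕ} {a : TTerm} : WF a → S a ≤ (i : ℤ) + 1 → WF (theta i a)

/-- Coefficients `k_i`. -/
def k (i : ℕ) : TTerm → TTerm
  | zero => zero
  | theta j b => if j ≤ i then theta j b else k i b

mutual
/-- The linear order on theta terms. -/
inductive Lt : TTerm → TTerm → Prop
  | zero {a : TTerm} : a ≠ zero → Lt zero a
  | idx {i j : ℕ} {a b : TTerm} : i < j → Lt (theta i a) (theta j b)
  | left {i : ℕ} {a b : TTerm} : Lt a b → Lt (k i a) (theta i b) →
      Lt (theta i a) (theta i b)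
  | right {i : ℕ} {a b : TTerm} : Lt b a → Le (theta i a) (k i b) →
      Lt (theta i a) (theta i b)

inductive Le : TTerm → TTerm → Prop
  | refl {a : TTerm} : Le a a
  | of_lt {a b : TTerm} : Lt a b → Le a b
end

end TTerm

/-- Replacing the last zero of `α` by `γ`. -/
def TTerm.subst : TTerm → TTerm → TTerm
  | TTerm.zero, g => g
  | TTerm.theta i b, g => TTerm.theta i (TTerm.subst b g)

namespace TTerm

/-- Number of nodes of a term. -/
def size : TTerm → ℕ
  | zero => 1
  | theta _ b => size b + 1

theorem size_pos (a : TTerm) : 0 < size a := by cases a <;> simp [size]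

theorem not_lt_zero {a : TTerm} (h : Lt a zero) : False := by
  cases h with
  | zero h => exact h rfl

theorem size_k (i : ℕ) : ∀ a, size (k i a) ≤ size a
  | zero => le_refl _
  | theta j b => by
    by_cases h : j ≤ i
    · simp [k, h]
    · simp only [k, if_neg h]
      exact (size_k i b).trans (by simp [size])

theorem k0_shape : ∀ a, k 0 a = zero ∨ ∃ w, k 0 a = theta 0 w
  | zero => Or.inl rfl
  | theta j b => by
    by_cases h : j ≤ 0
    · right
      have hj : j = 0 := Nat.le_zero.mp h
      subst hj
      exact ⟨b, by simp [k]⟩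
    · simpa [k, h] using k0_shape b

theorem k0_theta0 (x : TTerm) : k 0 (theta 0 x) = theta 0 x := by simp [k]

/-- Totality of the order. -/
theorem total_aux : ∀ (n : ℕ) (a b : TTerm), size a + size b ≤ n →
    Lt a b ∨ a = b ∨ Lt b a := by
  intro n
  induction n with
  | zero =>
    intro a b h
    have := size_pos a; have := size_pos b; omega
  | succ n ih =>
    intro a b hn
    match a, b with
    | zero, zero => exact Or.inr (Or.inl rfl)
    | zero, theta j y => exact Or.inl (Lt.zero (by simp))
    | theta i x, zero => exact Or.inr (Or.inr (Lt.zero (by simp)))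
    | theta i x, theta j y =>
      rcases Nat.lt_trichotomy i j with hij | rfl | hij
      · exact Or.inl (Lt.idx hij)
      · have hsx : size (theta i x) = size x + 1 := rfl
        have hsy : size (theta i y) = size y + 1 := rfl
        rcases ih x y (by omega) with hxy | rfl | hyx
        · rcases ih (k i x) (theta i y) (by have := size_k i x; omega) with h2 | h2 | h2
          · exact Or.inl (Lt.left hxy h2)
          · exact Or.inr (Or.inr (Lt.right hxy (by rw [h2]; exact Le.refl)))
          · exact Or.inr (Or.inr (Lt.right hxy (Le.of_lt h2)))
        · exact Or.inr (Or.inl rfl)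
        · rcases ih (k i y) (theta i x) (by have := size_k i y; omega) with h2 | h2 | h2
          · exact Or.inr (Or.inr (Lt.left hyx h2))
          · exact Or.inl (Lt.right hyx (by rw [h2]; exact Le.refl))
          · exact Or.inl (Lt.right hyx (Le.of_lt h2))
      · exact Or.inr (Or.inr (Lt.idx hij))

theorem total (a b : TTerm) : Lt a b ∨ a = b ∨ Lt b a :=
  total_aux (size a + size b) a b le_rfl

/-- `SpS t a` : `θ₀ a` is obtained by iterating `k 0` starting from `t`. -/
inductive SpS : TTerm → TTerm → Prop
  | base {t a : TTerm} : k 0 t = theta 0 a → SpS t a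
  | step {t p a : TTerm} : SpS t p → k 0 p = theta 0 a → SpS t a

theorem spS_size {t a : TTerm} (h : SpS t a) : size a < size t := by
  induction h with
  | @base a h =>
    have h1 := size_k 0 t
    rw [h] at h1
    simp only [size] at h1
    omega
  | @step p a h1 h2 ih =>
    have h3 := size_k 0 p
    rw [h2] at h3
    simp only [size] at h3
    omega

theorem spS_decomp {t a : TTerm} (h : SpS t a) :
    ∃ s, k 0 t = theta 0 s ∧ (a = s ∨ SpS s a) := by
  induction h with
  | @base a h => exact ⟨a, h, Or.inl rfl⟩
  | @step p a h1 h2 ih =>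
    obtain ⟨s, hs, hps⟩ := ih
    refine ⟨s, hs, Or.inr ?_⟩
    rcases hps with rfl | hps
    · exact SpS.base h2
    · exact SpS.step hps h2

/-- Spine elements compare below: `θ₀ a < θ₀ t` whenever `a` is a strict spine element of `t`. -/
theorem spine_lt : ∀ (n : ℕ) (t a : TTerm), size t + size a ≤ n → SpS t a →
    Lt (theta 0 a) (theta 0 t) := by
  intro n
  induction n with
  | zero =>
    intro t a h
    have := size_pos t; have := size_pos a; omega
  | succ n ih =>
    intro t a hn h
    rcases total a t with hat | rfl | hta
    · -- a < t : use left; need k₀ a < θ₀ t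
      rcases k0_shape a with hk | ⟨w, hw⟩
      · exact Lt.left hat (by rw [hk]; exact Lt.zero (by simp))
      · have hw' : SpS t w := SpS.step h hw
        have hsw : size w < size a := by
          have := size_k 0 a
          rw [hw] at this
          simp only [size] at this
          omega
        exact Lt.left hat (by rw [hw]; exact ih t w (by omega) hw')
    · exact absurd (spS_size h) (lt_irrefl _)
    · -- t < a : use right; need θ₀ a ≤ k₀ t
      obtain ⟨s, hs, has⟩ := spS_decomp h
      have hss : size s < size t := by
        have := size_k 0 t
        rw [hs] at this
        simp only [size] at this
        omega
      rcases has with rfl | has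
      · exact Lt.right hta (by rw [hs]; exact Le.refl)
      · exact Lt.right hta (by rw [hs]; exact Le.of_lt (ih s a (by omega) has))

theorem size_subst : ∀ (b g : TTerm), size g ≤ size (subst b g)
  | TTerm.zero, g => le_refl _
  | TTerm.theta i y, g => (size_subst y g).trans (by simp [subst, size])

/-- The main simultaneous induction: for any spine element `a` of `c` (including `c` itself),
`θ₀ a ≤ k₀ (b[θ₀ c])` and `θ₀ a < θ₀ (b[θ₀ c])`. -/
theorem main_pq (c : TTerm) : ∀ (n : ℕ) (b a : TTerm), size b + size a ≤ n →
    (a = c ∨ SpS c a) →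
    Le (theta 0 a) (k 0 (subst b (theta 0 c))) ∧
    Lt (theta 0 a) (theta 0 (subst b (theta 0 c))) := by
  intro n
  induction n with
  | zero =>
    intro b a h
    have := size_pos b; have := size_pos a; omega
  | succ n ih =>
    intro b a hn ha
    have hsa : size a ≤ size c := by
      rcases ha with rfl | h
      · exact le_refl _
      · exact (spS_size h).le
    have hQ : Le (theta 0 a) (k 0 (subst b (theta 0 c))) := by
      match b with
      | TTerm.zero =>
        show Le (theta 0 a) (k 0 (theta 0 c))
        rw [k0_theta0]
        rcases ha with rfl | h
        · exact Le.refl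
        · exact Le.of_lt (spine_lt (size c + size a) c a le_rfl h)
      | TTerm.theta 0 y =>
        show Le (theta 0 a) (k 0 (theta 0 (subst y (theta 0 c))))
        rw [k0_theta0]
        have hsy : size (TTerm.theta 0 y) = size y + 1 := rfl
        exact Le.of_lt (ih y a (by omega) ha).2
      | TTerm.theta (j+1) y =>
        show Le (theta 0 a) (k 0 (theta (j+1) (subst y (theta 0 c))))
        have hk : k 0 (theta (j+1) (subst y (theta 0 c))) = k 0 (subst y (theta 0 c)) := by
          simp [k]
        rw [hk]
        have hsy : size (TTerm.theta (j+1) y) = size y + 1 := rfl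
        exact (ih y a (by omega) ha).1
    refine ⟨hQ, ?_⟩
    rcases total a (subst b (theta 0 c)) with h | h | h
    · rcases k0_shape a with hk | ⟨w, hw⟩
      · exact Lt.left h (by rw [hk]; exact Lt.zero (by simp))
      · have hw' : SpS c w := by
          rcases ha with rfl | hs
          · exact SpS.base hw
          · exact SpS.step hs hw
        have hsw : size w < size a := by
          have := size_k 0 a
          rw [hw] at this
          simp only [size] at this
          omega
        exact Lt.left h (by rw [hw]; exact (ih b w (by omega) (Or.inr hw')).2)
    · exfalso
      have h1 : size (theta 0 c) ≤ size (subst b (theta 0 c)) := size_subst b (theta 0 c)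
      rw [← h] at h1
      simp only [size] at h1
      omega
    · exact Lt.right h hQ

end TTerm

/-- If `γ < Ω₁` then `γ ≤ β[γ]`, with equality only when `β = 0`. -/
theorem stmt4 (β γ : TTerm) (hβ : TTerm.WF β) (hγ : TTerm.WF γ)
    (hγ1 : TTerm.Lt γ (TTerm.theta 1 TTerm.zero)) :
    TTerm.Le γ (TTerm.subst β γ) ∧ (γ = TTerm.subst β γ → β = TTerm.zero) := by
  constructor
  · -- the inequality
    have hγ0 : γ = TTerm.zero ∨ ∃ c, γ = TTerm.theta 0 c := by
      cases γ with
      | zero => exact Or.inl rfl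
      | theta j c =>
        right
        cases hγ1 with
        | idx h =>
          have hj : j = 0 := by omega
          exact ⟨c, by rw [hj]⟩
        | left h1 h2 => exact absurd h1 TTerm.not_lt_zero
        | right h1 h2 =>
          exfalso
          cases h2 with
          | of_lt h3 => exact TTerm.not_lt_zero h3
    rcases hγ0 with rfl | ⟨c, rfl⟩
    · cases β with
      | zero => exact TTerm.Le.refl
      | theta i b =>
        exact TTerm.Le.of_lt (TTerm.Lt.zero (by simp [TTerm.subst]))
    · cases β with
      | zero => exact TTerm.Le.refl
      | theta i b =>
        apply TTerm.Le.of_lt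
        show TTerm.Lt (TTerm.theta 0 c) (TTerm.theta i (TTerm.subst b (TTerm.theta 0 c)))
        match i with
        | 0 =>
          exact (TTerm.main_pq c (TTerm.size b + TTerm.size c) b c le_rfl (Or.inl rfl)).2
        | i+1 => exact TTerm.Lt.idx (Nat.succ_pos _)
  · -- equality only when β = 0
    intro hb
    cases β with
    | zero => rfl
    | theta i y =>
      exfalso
      have h1 : TTerm.size γ ≤ TTerm.size (TTerm.subst y γ) := TTerm.size_subst y γ
      have h2 : TTerm.size γ = TTerm.size (TTerm.subst (TTerm.theta i y) γ) := congrArg TTerm.size hb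
      simp only [TTerm.subst, TTerm.size] at h2
      omega
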